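/- If f : F_q → F_q is a non-constant function with |D_f^{-1} D_f| ≤ (q+1)/2, then f is a permutation of F_q. -/

import Mathlib

open Pointwise

variable {F : Type*} [Field F] [Fintype F]

/-- The set of directions determined by the graph of `f`. -/
def dirs (f : F → F) : Set F := {d | ∃ x y : F, x ≠ y ∧ d = (f x - f y) / (x - y)}

/-- The set of inverses of the nonzero elements of `A`. -/
def invSet (A : Set F) : Set F := {b | ∃ a ∈ A, a ≠ 0 ∧ b = a⁻¹}

set_option linter.unusedSectionVars false

lemma mem_key (f : F → F) {z a b : F} (hza : f z ≠ f a) (hab : f a = f b)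
    (hzb : z ≠ b) : (z - a)/(z - b) ∈ invSet (dirs f) * dirs f := by
  have hzane : z ≠ a := fun h => hza (by rw [h])
  have d1mem : (f z - f a)/(z - a) ∈ dirs f := ⟨z, a, hzane, rfl⟩
  have d2mem : (f z - f b)/(z - b) ∈ dirs f := ⟨z, b, hzb, rfl⟩
  have hfza : f z - f a ≠ 0 := sub_ne_zero.mpr hza
  have hzan : z - a ≠ 0 := sub_ne_zero.mpr hzane
  have hzbn : z - b ≠ 0 := sub_ne_zero.mpr hzb
  have d1ne : (f z - f a)/(z - a) ≠ 0 := div_ne_zero hfza hzan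
  refine ⟨_, ⟨_, d1mem, d1ne, rfl⟩, _, d2mem, ?_⟩
  rw [← hab]
  field_simp

lemma card_le_ncard' {A : Finset F} {S : Set F} (h : ∀ x ∈ A, x ∈ S) : A.card ≤ S.ncard := by
  have h2 : (↑A : Set F) ⊆ S := fun x hx => h x (by exact_mod_cast hx)
  have := Set.ncard_le_ncard h2 (Set.toFinite S)
  rwa [Set.ncard_coe_finset] at this

theorem stmt7 (f : F → F) (hnc : ¬ ∃ c : F, ∀ x, f x = c)
    (hsize : (invSet (dirs f) * dirs f).ncard ≤ (Fintype.card F + 1) / 2) :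
    Function.Bijective f := by
  classical
  by_contra hbij
  set S := invSet (dirs f) * dirs f with hSdef
  set q := Fintype.card F with hq
  -- f not injective
  have hninj : ¬ Function.Injective f := fun h => hbij (Finite.injective_iff_bijective.mp h)
  rw [Function.not_injective_iff] at hninj
  obtain ⟨x₀, y₀, hfxy, hxy⟩ := hninj
  set v := f x₀ with hv
  -- a point with different value
  push_neg at hnc
  obtain ⟨z₀, hz₀⟩ := hnc v
  -- 0 and 1 in S
  have h0dir : (0:F) ∈ dirs f := ⟨x₀, y₀, hxy, by rw [← hfxy, ← hv, sub_self, zero_div]⟩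
  have hz₀x₀ : z₀ ≠ x₀ := fun h => hz₀ (by rw [h])
  have hdne : (f z₀ - v)/(z₀ - x₀) ≠ 0 :=
    div_ne_zero (sub_ne_zero.mpr hz₀) (sub_ne_zero.mpr hz₀x₀)
  have hddir : (f z₀ - v)/(z₀ - x₀) ∈ dirs f := ⟨z₀, x₀, hz₀x₀, rfl⟩
  have h1S : (1:F) ∈ S :=
    ⟨_, ⟨_, hddir, hdne, rfl⟩, _, hddir, inv_mul_cancel₀ hdne⟩
  have h0S : (0:F) ∈ S :=
    ⟨_, ⟨_, hddir, hdne, rfl⟩, 0, h0dir, mul_zero _⟩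
  -- level set T
  set T : Finset F := Finset.univ.filter (fun x => f x = v) with hT
  have hx₀T : x₀ ∈ T := by simp [hT, hv]
  have hy₀T : y₀ ∈ T := by simp [hT, ← hfxy]
  have hz₀T : z₀ ∉ T := by simp [hT, hz₀]
  have hmemT : ∀ x, x ∈ T ↔ f x = v := by intro x; simp [hT]
  have hT2 : 2 ≤ T.card := by
    refine Finset.one_lt_card.mpr ⟨x₀, hx₀T, y₀, hy₀T, hxy⟩
  by_cases hcase : q < 2 * T.card
  · -- Case 1: T is large
    set A : Finset F :=
      insert 0 (insert 1 ((T.erase x₀).image (fun a => (z₀ - a)/(z₀ - x₀)))) with hA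
    have hz₀x₀n : z₀ - x₀ ≠ 0 := sub_ne_zero.mpr hz₀x₀
    have hinj : Set.InjOn (fun a => (z₀ - a)/(z₀ - x₀)) ↑(T.erase x₀) := by
      intro a _ b _ hab
      simpa [div_eq_div_iff hz₀x₀n hz₀x₀n, hz₀x₀n, sub_right_injective.eq_iff] using hab
    have hcard : A.card = T.card + 1 := by
      rw [hA, Finset.card_insert_of_notMem, Finset.card_insert_of_notMem,
        Finset.card_image_of_injOn hinj, Finset.card_erase_of_mem hx₀T]
      · omega
      · simp only [Finset.mem_image, not_exists, not_and]
        intro a ha heq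
        rw [div_eq_one_iff_eq hz₀x₀n] at heq
        exact (Finset.mem_erase.mp ha).1 (sub_right_injective heq)
      · simp only [Finset.mem_insert, Finset.mem_image, not_or, not_exists, not_and]
        constructor
        · exact zero_ne_one
        · intro a ha heq
          rw [div_eq_zero_iff] at heq
          rcases heq with heq | heq
          · exact hz₀T ((sub_eq_zero.mp heq) ▸ (Finset.mem_erase.mp ha).2)
          · exact hz₀x₀n heq
    have hsub : ∀ x ∈ A, x ∈ S := by
      intro x hx
      rw [hA] at hx
      simp only [Finset.mem_insert, Finset.mem_image] at hx
      rcases hx with rfl | rfl | ⟨a, ha, rfl⟩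
      · exact h0S
      · exact h1S
      · obtain ⟨-, haT⟩ := Finset.mem_erase.mp ha
        exact mem_key f (by rw [(hmemT a).mp haT]; exact hz₀) (by rw [(hmemT a).mp haT, (hmemT x₀).mp hx₀T]) hz₀x₀
    have := card_le_ncard' hsub
    rw [hcard] at this
    omega
  · -- Case 2: T is small
    push_neg at hcase
    set Bad : Finset F := Finset.univ.filter
      (fun t => t ≠ 0 ∧ t ≠ 1 ∧ ∀ a ∈ T, ∀ b ∈ T, (a - t*b)/(1-t) ∈ T) with hBad
    set Good : Finset F := Finset.univ.filter
      (fun t => t ≠ 0 ∧ t ≠ 1 ∧ ¬ (∀ a ∈ T, ∀ b ∈ T, (a - t*b)/(1-t) ∈ T)) with hGood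
    -- Good ∪ {0,1} ⊆ S
    have hGoodS : ∀ t ∈ Good, t ∈ S := by
      intro t ht
      rw [hGood, Finset.mem_filter] at ht
      obtain ⟨-, ht0, ht1, hne⟩ := ht
      push_neg at hne
      obtain ⟨a, haT, b, hbT, hzT⟩ := hne
      set z := (a - t*b)/(1-t) with hz
      have h1t : (1:F) - t ≠ 0 := sub_ne_zero.mpr (Ne.symm ht1)
      have habne : a ≠ b := by
        intro h
        apply hzT
        rw [hz, h]
        have : b - t*b = b*(1-t) := by ring
        rw [this, mul_div_assoc, div_self h1t, mul_one]
        exact hbT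
      have hzb : z - b = (a - b)/(1-t) := by
        rw [hz]; field_simp; ring
      have hzbne : z - b ≠ 0 := by
        rw [hzb]; exact div_ne_zero (sub_ne_zero.mpr habne) h1t
      have hza : z - a = t * (z - b) := by
        rw [hzb, hz]; field_simp; ring
      have key : (z - a)/(z - b) = t := by
        rw [hza, mul_div_assoc, div_self hzbne, mul_one]
      rw [← key]
      refine mem_key f ?_ ?_ (sub_ne_zero.mp hzbne)
      · rw [(hmemT a).mp haT]
        intro h
        exact hzT ((hmemT z).mpr h)
      · rw [(hmemT a).mp haT, (hmemT b).mp hbT]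
    -- Bad injects into T minus two points
    have hBadcard : Bad.card ≤ T.card - 2 := by
      have hsub2 : ∀ t ∈ Bad, (x₀ - t*y₀)/(1-t) ∈ (T.erase x₀).erase y₀ := by
        intro t ht
        rw [hBad, Finset.mem_filter] at ht
        obtain ⟨-, ht0, ht1, hcl⟩ := ht
        have h1t : (1:F) - t ≠ 0 := sub_ne_zero.mpr (Ne.symm ht1)
        refine Finset.mem_erase.mpr ⟨?_, Finset.mem_erase.mpr ⟨?_, hcl x₀ hx₀T y₀ hy₀T⟩⟩
        · intro h
          rw [div_eq_iff h1t] at h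
          apply hxy
          have : x₀ - y₀ = 0 := by linear_combination h
          exact sub_eq_zero.mp this
        · intro h
          rw [div_eq_iff h1t] at h
          have h2 : t * (x₀ - y₀) = 0 := by linear_combination h
          rcases mul_eq_zero.mp h2 with h' | h'
          · exact ht0 h'
          · exact hxy (sub_eq_zero.mp h')
      have hinj2 : Set.InjOn (fun t => (x₀ - t*y₀)/(1-t)) ↑Bad := by
        intro s hs t ht hst
        simp only [Finset.coe_filter, Set.mem_setOf_eq, hBad] at hs ht
        have h1s : (1:F) - s ≠ 0 := sub_ne_zero.mpr (Ne.symm hs.2.2.1)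
        have h1t : (1:F) - t ≠ 0 := sub_ne_zero.mpr (Ne.symm ht.2.2.1)
        have := (div_eq_div_iff h1s h1t).mp hst
        have h2 : (s - t) * (x₀ - y₀) = 0 := by linear_combination this
        rcases mul_eq_zero.mp h2 with h' | h'
        · exact sub_eq_zero.mp h'
        · exact absurd (sub_eq_zero.mp h') hxy
      have := Finset.card_le_card_of_injOn _ hsub2 hinj2
      have hmemy : y₀ ∈ T.erase x₀ := Finset.mem_erase.mpr ⟨Ne.symm hxy, hy₀T⟩
      rw [Finset.card_erase_of_mem hmemy, Finset.card_erase_of_mem hx₀T] at this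
      omega
    -- univ covered
    have hcover : Finset.univ ⊆ insert 0 (insert 1 (Good ∪ Bad)) := by
      intro t _
      simp only [Finset.mem_insert, Finset.mem_union, hGood, hBad, Finset.mem_filter,
        Finset.mem_univ, true_and]
      by_cases h0 : t = 0
      · exact Or.inl h0
      by_cases h1 : t = 1
      · exact Or.inr (Or.inl h1)
      by_cases hall : ∀ a ∈ T, ∀ b ∈ T, (a - t*b)/(1-t) ∈ T
      · exact Or.inr (Or.inr (Or.inr ⟨h0, h1, hall⟩))
      · exact Or.inr (Or.inr (Or.inl ⟨h0, h1, hall⟩))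
    have hqle : q ≤ 2 + Good.card + Bad.card := by
      have := Finset.card_le_card hcover
      rw [Finset.card_univ] at this
      calc q ≤ (insert (0:F) (insert 1 (Good ∪ Bad))).card := this
        _ ≤ 1 + (insert (1:F) (Good ∪ Bad)).card := by
            exact le_trans (Finset.card_insert_le _ _) (by omega)
        _ ≤ 1 + (1 + (Good ∪ Bad).card) := by
            have := Finset.card_insert_le (1:F) (Good ∪ Bad); omega
        _ ≤ 2 + Good.card + Bad.card := by
            have := Finset.card_union_le Good Bad; omega
    -- Good ∪ {0,1} ⊆ S gives the bound
    have hGS : ∀ x ∈ insert (0:F) (insert 1 Good), x ∈ S := by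
      intro x hx
      rcases Finset.mem_insert.mp hx with rfl | hx
      · exact h0S
      rcases Finset.mem_insert.mp hx with rfl | hx
      · exact h1S
      · exact hGoodS x hx
    have hGcard : (insert (0:F) (insert 1 Good)).card = Good.card + 2 := by
      rw [Finset.card_insert_of_notMem, Finset.card_insert_of_notMem]
      · rw [hGood]; simp
      · simp only [Finset.mem_insert, not_or]
        refine ⟨zero_ne_one, ?_⟩
        rw [hGood]; simp
    have := card_le_ncard' hGS
    rw [hGcard] at this
    omega
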